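/- arXiv:2305.08269 — 2 statements merged into one kernel-verified Lean document; each statement's English description precedes it below -/
import Mathlib

section
/- Let x, y ∈ {1} × [n]^L, b_1, b_2 ∈ {0,1}, v ∈ V, and let j be the maximum index with (x_1, …, x_j) = (y_1, …, y_j). If r̃_v((x,b_1),(y,b_2)) > 0, then v appears on Tail(j, S_y) or x = y. -/
open Finset

variable {n L : ℕ}

open Fin.NatCast in
/-- The segment of the staircase between milestones `x i` and `x (i+1)` (`0`-based `i`),
namely the path `P^{x_i, x_{i+1}}` of the all-pairs set of paths `P`. -/
def seg (P : Fin n → Fin n → List (Fin n)) (x : Fin (L + 1) → Fin n) (i : ℕ) :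
    List (Fin n) :=
  P (x i) (x (i + 1))

/-- The staircase `S_x` induced by the milestone sequence `x` and the all-pairs set of
paths `P`: the concatenation `P^{x_1,x_2} ∘ P^{x_2,x_3} ∘ ⋯ ∘ P^{x_L,x_{L+1}}` (as a walk;
each path after the first contributes everything but its first vertex). -/
def staircase (P : Fin n → Fin n → List (Fin n)) (x : Fin (L + 1) → Fin n) :
    List (Fin n) :=
  x 0 :: ((List.range L).flatMap fun i => (seg P x i).tail)

/-- The largest (`0`-based) segment index whose path contains `v`. -/
def segIdx (P : Fin n → Fin n → List (Fin n)) (x : Fin (L + 1) → Fin n) (v : Fin n) : ℕ :=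
  ((Finset.range L).filter fun i => v ∈ seg P x i).sup id

/-- The value function `f_x`: `f_x v = dist(v, 1)` if `v` is not on the staircase `S_x`,
and `f_x v = −(i·n + j)` if `v` is on `S_x`, where `i` is the maximum (1-based) index with
`v ∈ P^{x_i,x_{i+1}}` and `v` is the `j`-th vertex of `P^{x_i,x_{i+1}}`. -/
noncomputable def fx (G : SimpleGraph (Fin n)) (P : Fin n → Fin n → List (Fin n))
    (v₁ : Fin n) (x : Fin (L + 1) → Fin n) (v : Fin n) : ℤ :=
  if v ∈ staircase P x then
    -(((segIdx P x v : ℤ) + 1) * (n : ℤ) + (((seg P x (segIdx P x v)).idxOf v : ℤ) + 1))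
  else (G.dist v v₁ : ℤ)

/-- The function `g_{x,b}`, hiding the bit `b` at the last milestone `x_{L+1}` (second
component `b ∈ {0,1}` there, `−1` elsewhere). -/
noncomputable def gx (G : SimpleGraph (Fin n)) (P : Fin n → Fin n → List (Fin n))
    (v₁ : Fin n) (x : Fin (L + 1) → Fin n) (b : Bool) (v : Fin n) : ℤ × ℤ :=
  (fx G P v₁ x v, if v = x (Fin.last L) then (if b then 1 else 0) else -1)

/-- The maximum (1-based) index `j` such that `(x_1, …, x_j) = (y_1, …, y_j)`. -/
def maxPrefix (x y : Fin (L + 1) → Fin n) : ℕ :=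
  ((Finset.Icc 1 (L + 1)).filter fun j => ∀ i : Fin (L + 1), (i : ℕ) < j → x i = y i).sup id

/-- The relation `r`: zero if the bits agree or either sequence is not good (injective),
and `n ^ maxPrefix` otherwise. -/
noncomputable def rrel (p q : (Fin (L + 1) → Fin n) × Bool) : ℝ :=
  if p.2 = q.2 ∨ ¬ Function.Injective p.1 ∨ ¬ Function.Injective q.1 then 0
  else (n : ℝ) ^ maxPrefix p.1 q.1

/-- The relation `r_v`: equal to `r` if `g_{x,b₁}(v) ≠ g_{y,b₂}(v)` and `0` otherwise. -/
noncomputable def rv (G : SimpleGraph (Fin n)) (P : Fin n → Fin n → List (Fin n))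
    (v₁ v : Fin n) (p q : (Fin (L + 1) → Fin n) × Bool) : ℝ :=
  if gx G P v₁ p.1 p.2 v ≠ gx G P v₁ q.1 q.2 v then rrel p q else 0

/-- The relation `r̃_v`: equal to `r_v` if `μ(S_x, v) ≤ μ(S_y, v)` and `0` otherwise. -/
noncomputable def rvt (G : SimpleGraph (Fin n)) (P : Fin n → Fin n → List (Fin n))
    (v₁ v : Fin n) (p q : (Fin (L + 1) → Fin n) × Bool) : ℝ :=
  if (staircase P p.1).count v ≤ (staircase P q.1).count v then rv G P v₁ v p q else 0

open Fin.NatCast in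
/-- `Tail(j, S_x)` for a 1-based index `j ∈ [L]`: the walk
`P^{x_j,x_{j+1}} ∘ ⋯ ∘ P^{x_L,x_{L+1}}` with the first occurrence of `x_j` removed.
For `j = L + 1` it is the empty sequence. -/
def tailWalk (P : Fin n → Fin n → List (Fin n)) (x : Fin (L + 1) → Fin n) (j : ℕ) :
    List (Fin n) :=
  if j ≤ L then
    (seg P x (j - 1) ++ ((List.range L).drop j).flatMap fun i => (seg P x i).tail).erase
      (x (j - 1))
  else []

/-- The vertex congestion of the all-pairs set of paths `P`:
`max_{w} Σ_{u,v} (number of occurrences of w on P^{u,v})`. -/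
def congestion (P : Fin n → Fin n → List (Fin n)) : ℕ :=
  Finset.univ.sup fun w => ∑ u : Fin n, ∑ v : Fin n, (P u v).count w

/-- `N_v(u)`: the number of paths in `P` that start at `u` and contain `v`. -/
def Npaths (P : Fin n → Fin n → List (Fin n)) (v u : Fin n) : ℕ :=
  (Finset.univ.filter fun w => v ∈ P u w).card

private lemma nat_sup_mem {s : Finset ℕ} (hs : s.Nonempty) : s.sup id ∈ s := by
  rw [← Finset.sup'_eq_sup hs, ← Finset.max'_eq_sup']
  exact Finset.max'_mem s hs

private lemma drop_range_helper {m N : ℕ} (h : m ≤ N) :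
    (List.range N).drop m = List.range' m (N - m) := by
  have h1 : List.range N = List.range' 0 m ++ List.range' m (N - m) := by
    rw [List.range_eq_range']
    rw [show (List.range' 0 m ++ List.range' m (N - m)) = List.range' 0 ((N - m) + m) from by
      simpa [Nat.add_comm] using List.range'_append_1 (s := 0) (m := m) (n := N - m)]
    congr 1
    omega
  rw [h1, List.drop_left' (by simp)]

open Fin.NatCast in
private lemma cast_sub_one {j : ℕ} (h1 : 1 ≤ j) :
    ((j : Fin (L + 1)) - 1) = ((j - 1 : ℕ) : Fin (L + 1)) := by
  rw [sub_eq_iff_eq_add]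
  have h2 : ((j - 1 : ℕ) : Fin (L + 1)) + 1 = ((j - 1 + 1 : ℕ) : Fin (L + 1)) := by
    push_cast; ring
  rw [h2, Nat.sub_add_cancel h1]

open Fin.NatCast in
/-- Let `x, y ∈ {1} × [n]^L`, `b₁, b₂ ∈ {0,1}`, `v ∈ V`, and let `j` be
the maximum index with `(x_1, …, x_j) = (y_1, …, y_j)`.  If `r̃_v((x,b₁),(y,b₂)) > 0`,
then `v` appears on `Tail(j, S_y)` or `x = y`. -/
theorem stmt12 (hn : 0 < n) (hL : 0 < L)
    (G : SimpleGraph (Fin n)) (hconn : G.Connected)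
    (P : Fin n → Fin n → List (Fin n))
    (hhead : ∀ u v, (P u v).head? = some u)
    (hlast : ∀ u v, (P u v).getLast? = some v)
    (hchain : ∀ u v, (P u v).Chain' G.Adj)
    (hnodup : ∀ u v, (P u v).Nodup)
    (hself : ∀ u, P u u = [u])
    (x y : Fin (L + 1) → Fin n)
    (hx0 : x 0 = (⟨0, hn⟩ : Fin n)) (hy0 : y 0 = (⟨0, hn⟩ : Fin n))
    (b₁ b₂ : Bool) (v : Fin n)
    (hpos : 0 < rvt G P ⟨0, hn⟩ v (x, b₁) (y, b₂)) :
    v ∈ tailWalk P y (maxPrefix x y) ∨ x = y := by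
  -- extract hypotheses from positivity
  unfold rvt at hpos
  split_ifs at hpos with hcount
  swap
  · exact absurd hpos (lt_irrefl 0)
  unfold rv at hpos
  split_ifs at hpos with hg
  swap
  · exact absurd hpos (lt_irrefl 0)
  unfold rrel at hpos
  split_ifs at hpos with hr
  · exact absurd hpos (lt_irrefl 0)
  push_neg at hr
  obtain ⟨hb, hinjx, hinjy⟩ := hr
  simp only at hcount hg hinjx hinjy
  -- facts about j := maxPrefix x y
  set j := maxPrefix x y with hjdef
  have hcastv : ∀ i : ℕ, i < L + 1 → ((i : Fin (L + 1)) : ℕ) = i := fun i hi =>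
    Fin.val_cast_of_lt hi
  have hne : ((Finset.Icc 1 (L + 1)).filter fun k =>
      ∀ i : Fin (L + 1), (i : ℕ) < k → x i = y i).Nonempty := by
    refine ⟨1, Finset.mem_filter.mpr ⟨Finset.mem_Icc.mpr ⟨le_refl 1, by omega⟩, ?_⟩⟩
    intro i hi
    have : i = 0 := by
      apply Fin.ext
      simpa using Nat.lt_one_iff.mp hi
    rw [this, hx0, hy0]
  have hjmem : j ∈ (Finset.Icc 1 (L + 1)).filter fun k =>
      ∀ i : Fin (L + 1), (i : ℕ) < k → x i = y i := nat_sup_mem hne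
  rw [Finset.mem_filter, Finset.mem_Icc] at hjmem
  obtain ⟨⟨hj1, hjL1⟩, hpre⟩ := hjmem
  rcases Nat.lt_or_ge L j with hjL | hjL
  · -- j = L + 1, so x = y
    right
    funext i
    exact hpre i (by omega)
  -- main case : j ≤ L
  left
  have hpreN : ∀ i : ℕ, i < j → x (i : Fin (L + 1)) = y (i : Fin (L + 1)) := by
    intro i hi
    exact hpre _ (by rw [hcastv i (by omega)]; exact hi)
  -- segments expressed with ℕ-casts
  have hsegN : ∀ (z : Fin (L + 1) → Fin n) (i : ℕ),
      seg P z i = P (z (i : Fin (L + 1))) (z ((i + 1 : ℕ) : Fin (L + 1))) := by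
    intro z i
    rw [seg]
    push_cast
    ring_nf
  have hsegstruct : ∀ (z : Fin (L + 1) → Fin n) (i : ℕ),
      seg P z i = z (i : Fin (L + 1)) :: (seg P z i).tail := by
    intro z i
    have h := hhead (z (i : Fin (L + 1))) (z ((i + 1 : ℕ) : Fin (L + 1)))
    rw [← hsegN] at h
    exact (List.cons_head?_tail (Option.mem_def.mpr h)).symm
  -- milestones lie on the tail of the previous segment
  have hmile : ∀ (z : Fin (L + 1) → Fin n), Function.Injective z → ∀ i : ℕ, 1 ≤ i → i ≤ L →
      z (i : Fin (L + 1)) ∈ (seg P z (i - 1)).tail := by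
    intro z hz i h1 h2
    have hi : i - 1 + 1 = i := by omega
    have hlast' : z (i : Fin (L + 1)) ∈ seg P z (i - 1) := by
      have h := hlast (z ((i - 1 : ℕ) : Fin (L + 1))) (z ((i - 1 + 1 : ℕ) : Fin (L + 1)))
      rw [← hsegN, hi] at h
      exact List.mem_of_mem_getLast? (Option.mem_def.mpr h)
    rw [hsegstruct z (i - 1), List.mem_cons] at hlast'
    rcases hlast' with h | h
    · exfalso
      have := hz h.symm
      have := congrArg Fin.val this
      rw [hcastv (i - 1) (by omega), hcastv i (by omega)] at this
      omega
    · exact h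
  -- decomposition of the staircase
  have hdecomp : ∀ (z : Fin (L + 1) → Fin n), staircase P z =
      z 0 :: (((List.range (j - 1)).flatMap fun i => (seg P z i).tail) ++
        ((List.range' (j - 1) (L - (j - 1))).flatMap fun i => (seg P z i).tail)) := by
    intro z
    rw [staircase]
    congr 1
    rw [← List.flatMap_append]
    congr 1
    rw [← List.take_append_drop (j - 1) (List.range L), List.take_range,
      Nat.min_eq_left (by omega), drop_range_helper (by omega)]
  -- the prefix parts agree
  have hA : ((List.range (j - 1)).flatMap fun i => (seg P x i).tail) =
      ((List.range (j - 1)).flatMap fun i => (seg P y i).tail) := by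
    rw [List.flatMap_def, List.flatMap_def]
    congr 1
    apply List.map_congr_left
    intro i hi
    rw [List.mem_range] at hi
    rw [hsegN x i, hsegN y i, hpreN i (by omega), hpreN (i + 1) (by omega)]
  -- the tail walk equals the B-part of the staircase of y
  have hTW : tailWalk P y j = (List.range' (j - 1) (L - (j - 1))).flatMap
      fun i => (seg P y i).tail := by
    rw [tailWalk, if_pos hjL, drop_range_helper (by omega : j ≤ L)]
    rw [show L - (j - 1) = (L - j) + 1 by omega, List.range'_succ]
    rw [List.flatMap_cons]
    rw [hsegstruct y (j - 1), cast_sub_one hj1, List.cons_append, List.erase_cons_head]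
    rw [show j - 1 + 1 = j by omega]
    simp
  by_contra hv
  rw [hTW] at hv
  -- v not on tails of y-segments ≥ j - 1
  have hnotY : ∀ i : ℕ, j - 1 ≤ i → i < L → v ∉ (seg P y i).tail := by
    intro i h1 h2 hmem
    exact hv (List.mem_flatMap.mpr ⟨i, List.mem_range'_1.mpr ⟨h1, by omega⟩, hmem⟩)
  -- counting: v not on tails of x-segments ≥ j - 1 either
  have hvBy : v ∉ (List.range' (j - 1) (L - (j - 1))).flatMap fun i => (seg P y i).tail := hv
  have hvBx : v ∉ (List.range' (j - 1) (L - (j - 1))).flatMap fun i => (seg P x i).tail := by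
    rw [← List.count_eq_zero]
    rw [hdecomp x, hdecomp y, hx0, hy0] at hcount
    rw [List.count_cons, List.count_cons, List.count_append, List.count_append, hA,
      List.count_eq_zero.mpr hvBy] at hcount
    omega
  have hnotX : ∀ i : ℕ, j - 1 ≤ i → i < L → v ∉ (seg P x i).tail := by
    intro i h1 h2 hmem
    exact hvBx (List.mem_flatMap.mpr ⟨i, List.mem_range'_1.mpr ⟨h1, by omega⟩, hmem⟩)
  -- v is not a late milestone
  have hvnex : ∀ i : ℕ, j ≤ i → i ≤ L → v ≠ x (i : Fin (L + 1)) := by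
    intro i h1 h2 heq
    exact hnotX (i - 1) (by omega) (by omega) (heq ▸ hmile x hinjx i (by omega) h2)
  have hvney : ∀ i : ℕ, j ≤ i → i ≤ L → v ≠ y (i : Fin (L + 1)) := by
    intro i h1 h2 heq
    exact hnotY (i - 1) (by omega) (by omega) (heq ▸ hmile y hinjy i (by omega) h2)
  -- segment membership is the same for x and y
  have hsegiff : ∀ i : ℕ, i < L → (v ∈ seg P x i ↔ v ∈ seg P y i) := by
    intro i hiL
    rcases Nat.lt_or_ge i (j - 1) with h | h
    · rw [hsegN x i, hsegN y i, hpreN i (by omega), hpreN (i + 1) (by omega)]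
    · rw [hsegstruct x i, hsegstruct y i, List.mem_cons, List.mem_cons]
      have hx' := hnotX i h hiL
      have hy' := hnotY i h hiL
      rcases Nat.lt_or_ge i j with hij | hij
      · have hieq : x (i : Fin (L + 1)) = y (i : Fin (L + 1)) := hpreN i hij
        rw [hieq]
        exact or_congr Iff.rfl ⟨fun h' => absurd h' hx', fun h' => absurd h' hy'⟩
      · constructor
        · rintro (h' | h')
          · exact absurd h' (hvnex i hij (by omega))
          · exact absurd h' hx'
        · rintro (h' | h')
          · exact absurd h' (hvney i hij (by omega))
          · exact absurd h' hy'
  have hFeq : ((Finset.range L).filter fun i => v ∈ seg P x i) =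
      ((Finset.range L).filter fun i => v ∈ seg P y i) := by
    ext i
    simp only [Finset.mem_filter, Finset.mem_range]
    constructor
    · rintro ⟨h1, h2⟩; exact ⟨h1, (hsegiff i h1).mp h2⟩
    · rintro ⟨h1, h2⟩; exact ⟨h1, (hsegiff i h1).mpr h2⟩
  have hidx : segIdx P x v = segIdx P y v := by
    rw [segIdx, segIdx, hFeq]
  -- staircase membership is the same for x and y
  have hstair : v ∈ staircase P x ↔ v ∈ staircase P y := by
    rw [hdecomp x, hdecomp y, hx0, hy0, hA]
    simp only [List.mem_cons, List.mem_append]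
    constructor
    · rintro (h | h | h)
      · exact Or.inl h
      · exact Or.inr (Or.inl h)
      · exact absurd h hvBx
    · rintro (h | h | h)
      · exact Or.inl h
      · exact Or.inr (Or.inl h)
      · exact absurd h hvBy
  -- f_x v = f_y v
  have hfx : fx G P ⟨0, hn⟩ x v = fx G P ⟨0, hn⟩ y v := by
    rw [fx, fx]
    by_cases hvx : v ∈ staircase P x
    · rw [if_pos hvx, if_pos (hstair.mp hvx), ← hidx]
      -- find a segment of x containing v
      have hFne : ((Finset.range L).filter fun i => v ∈ seg P x i).Nonempty := by
        rw [hdecomp x] at hvx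
        rcases List.mem_cons.mp hvx with h | h
        · refine ⟨0, Finset.mem_filter.mpr ⟨Finset.mem_range.mpr hL, ?_⟩⟩
          rw [hsegstruct x 0, List.mem_cons]
          left
          rw [h]
          norm_num
        · rcases List.mem_append.mp h with h | h
          · obtain ⟨i, hi, hmem⟩ := List.mem_flatMap.mp h
            rw [List.mem_range] at hi
            exact ⟨i, Finset.mem_filter.mpr ⟨Finset.mem_range.mpr (by omega),
              List.mem_of_mem_tail hmem⟩⟩
          · exact absurd h hvBx
      have hIm : segIdx P x v ∈ (Finset.range L).filter fun i => v ∈ seg P x i := by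
        rw [segIdx]
        exact nat_sup_mem hFne
      rw [Finset.mem_filter, Finset.mem_range] at hIm
      obtain ⟨hIL, hIseg⟩ := hIm
      set I := segIdx P x v with hI
      congr 2
      -- (seg P x I).indexOf v = (seg P y I).indexOf v
      rcases Nat.lt_or_ge I (j - 1) with h | h
      · rw [hsegN x I, hsegN y I, hpreN I (by omega), hpreN (I + 1) (by omega)]
      · -- I = j - 1 and v is the head
        have hIj : I < j := by
          by_contra hc
          push_neg at hc
          rw [hsegstruct x I, List.mem_cons] at hIseg
          rcases hIseg with h' | h'
          · exact hvnex I hc (by omega) h'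
          · exact hnotX I (by omega) hIL h'
        have hvhead : v = x (I : Fin (L + 1)) := by
          rw [hsegstruct x I, List.mem_cons] at hIseg
          rcases hIseg with h' | h'
          · exact h'
          · exact absurd h' (hnotX I h hIL)
        have hvheady : v = y (I : Fin (L + 1)) := hvhead.trans (hpreN I hIj)
        rw [hsegstruct x I, hsegstruct y I, ← hvhead, ← hvheady,
          List.idxOf_cons_self, List.idxOf_cons_self]
    · rw [if_neg hvx, if_neg (fun h => hvx (hstair.mpr h))]
  -- last milestones
  have hlastcast : ((L : ℕ) : Fin (L + 1)) = Fin.last L := by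
    apply Fin.ext
    rw [hcastv L (by omega), Fin.val_last]
  have hvlx : v ≠ x (Fin.last L) := by
    rw [← hlastcast]
    exact hvnex L hjL le_rfl
  have hvly : v ≠ y (Fin.last L) := by
    rw [← hlastcast]
    exact hvney L hjL le_rfl
  exact hg (by rw [gx, gx, hfx, if_neg hvlx, if_neg hvly])
end

section
/- Let x ∈ {1} × [n]^L, b_1 ∈ {0,1}, v ∈ V, and j ∈ [L]. Then Σ over y ∈ {1} × [n]^L with max{i : (x_1, …, x_i) = (y_1, …, y_i)} = j and over b_2 ∈ {0,1} of r̃_v((x,b_1),(y,b_2)) ≤ Σ over y ∈ {1} × [n]^L with max{i : (x_1, …, x_i) = (y_1, …, y_i)} = j and with v appearing on Tail(j, S_y) of r((x,b_1),(y,1−b_1)). -/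
open Finset

variable {n L : ℕ}

open Fin.NatCast

section Aux

variable {n L : ℕ}

private lemma range'_drop_aux (s m k : ℕ) :
    (List.range' s m).drop k = List.range' (s + k) (m - k) := by
  induction k generalizing s m with
  | zero => simp
  | succ k ih =>
    cases m with
    | zero => simp
    | succ m =>
      rw [List.range'_succ, List.drop_succ_cons, ih (s + 1) m,
        show s + 1 + k = s + (k + 1) from by omega,
        show m - k = m + 1 - (k + 1) from by omega]

private lemma drop_range_eq (L k : ℕ) :
    (List.range L).drop k = List.range' k (L - k) := by
  rw [List.range_eq_range', range'_drop_aux, Nat.zero_add]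

private lemma flatMap_congr' {α β : Type*} {l : List α} {f g : α → List β}
    (h : ∀ a ∈ l, f a = g a) : l.flatMap f = l.flatMap g := by
  induction l with
  | nil => rfl
  | cons a l ih =>
    rw [List.flatMap_cons, List.flatMap_cons, h a (by simp),
      ih (fun a ha => h a (by simp [ha]))]

/-- The suffix of the staircase consisting of the tails of segments `k, …, L-1`. -/
def sufW (P : Fin n → Fin n → List (Fin n)) (x : Fin (L + 1) → Fin n) (k : ℕ) :
    List (Fin n) :=
  (List.range' k (L - k)).flatMap fun i => (seg P x i).tail

lemma mem_sufW {P : Fin n → Fin n → List (Fin n)} {x : Fin (L + 1) → Fin n} {k : ℕ}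
    {v : Fin n} : v ∈ sufW P x k ↔ ∃ i, k ≤ i ∧ i < L ∧ v ∈ (seg P x i).tail := by
  simp only [sufW, List.mem_flatMap, List.mem_range']
  constructor
  · rintro ⟨m, ⟨i, hi, rfl⟩, hm⟩
    exact ⟨k + 1 * i, by omega, by omega, hm⟩
  · rintro ⟨i, h1, h2, h3⟩
    exact ⟨i, ⟨i - k, by omega, by omega⟩, h3⟩

lemma stair_split (P : Fin n → Fin n → List (Fin n)) (x : Fin (L + 1) → Fin n) {k : ℕ}
    (hk : k ≤ L) :
    staircase P x =
      (x 0 :: (List.range k).flatMap fun i => (seg P x i).tail) ++ sufW P x k := by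
  have h : List.range L = List.range k ++ List.range' k (L - k) := by
    conv_lhs => rw [← List.take_append_drop k (List.range L)]
    rw [List.take_range, drop_range_eq, inf_eq_left.mpr hk]
  unfold staircase sufW
  rw [h, List.flatMap_append, List.cons_append]

lemma seg_cons {P : Fin n → Fin n → List (Fin n)} (hhead : ∀ u v, (P u v).head? = some u)
    (x : Fin (L + 1) → Fin n) (i : ℕ) :
    ∃ t, seg P x i = x i :: t := by
  obtain ⟨t, ht⟩ := List.head?_eq_some_iff.mp (hhead (x i) (x (i + 1)))
  exact ⟨t, ht⟩

lemma tailWalk_eq {P : Fin n → Fin n → List (Fin n)}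
    (hhead : ∀ u v, (P u v).head? = some u)
    (y : Fin (L + 1) → Fin n) {j : ℕ} (hj1 : 1 ≤ j) (hjL : j ≤ L) :
    tailWalk P y j = sufW P y (j - 1) := by
  obtain ⟨t, ht⟩ := seg_cons hhead y (j - 1)
  have hsuf : sufW P y (j - 1) =
      (seg P y (j - 1)).tail ++ ((List.range L).drop j).flatMap fun i => (seg P y i).tail := by
    unfold sufW
    rw [drop_range_eq]
    have h1 : L - (j - 1) = (L - j) + 1 := by omega
    rw [h1, List.range'_succ]
    have h2 : j - 1 + 1 = j := by omega
    rw [h2, List.flatMap_cons]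
  have e3 : j - 1 + 1 = j := by omega
  have hjc : ((j : ℕ) : Fin (L + 1)) - 1 = ((j - 1 : ℕ) : Fin (L + 1)) := by
    rw [sub_eq_iff_eq_add, ← Nat.cast_add_one, e3]
  unfold tailWalk
  rw [if_pos hjL, hsuf, ht, hjc, List.tail_cons, List.cons_append, List.erase_cons_head]

lemma key_not_milestone {P : Fin n → Fin n → List (Fin n)}
    (hhead : ∀ u v, (P u v).head? = some u) (hlast : ∀ u v, (P u v).getLast? = some v)
    {z : Fin (L + 1) → Fin n} (hz : Function.Injective z) {j : ℕ}
    (hj1 : 1 ≤ j) (hjL : j ≤ L) {v : Fin n} (hv : v ∉ sufW P z (j - 1)) :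
    ∀ i : ℕ, j ≤ i → i ≤ L → v ≠ z (i : ℕ) := by
  intro i hji hiL hveq
  obtain ⟨t, ht⟩ := seg_cons hhead z (i - 1)
  have e2 : ((i - 1 : ℕ) : Fin (L + 1)) + 1 = ((i : ℕ) : Fin (L + 1)) := by
    rw [← Nat.cast_add_one, show i - 1 + 1 = i from by omega]
  have hgl : (seg P z (i - 1)).getLast? = some (z (i : ℕ)) := by
    unfold seg
    rw [e2]
    exact hlast _ _
  have hne : z ((i - 1 : ℕ) : Fin (L + 1)) ≠ z ((i : ℕ) : Fin (L + 1)) := by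
    intro hcon
    have hc := hz hcon
    have h1 : ((i - 1 : ℕ) : Fin (L + 1)).val = i - 1 := Fin.val_cast_of_lt (by omega)
    have h2 : ((i : ℕ) : Fin (L + 1)).val = i := Fin.val_cast_of_lt (by omega)
    rw [hc, h2] at h1
    omega
  have hmem : z ((i : ℕ) : Fin (L + 1)) ∈ seg P z (i - 1) := by
    obtain ⟨ys, hys⟩ := List.getLast?_eq_some_iff.mp hgl
    rw [hys]
    simp
  rw [ht] at hmem
  rcases List.mem_cons.mp hmem with h | h
  · exact hne h.symm
  · apply hv
    rw [mem_sufW]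
    refine ⟨i - 1, by omega, by omega, ?_⟩
    rw [ht, List.tail_cons, hveq]
    exact h

lemma key_seg {P : Fin n → Fin n → List (Fin n)}
    (hhead : ∀ u v, (P u v).head? = some u) (hlast : ∀ u v, (P u v).getLast? = some v)
    {z : Fin (L + 1) → Fin n} (hz : Function.Injective z) {j : ℕ}
    (hj1 : 1 ≤ j) (hjL : j ≤ L) {v : Fin n} (hv : v ∉ sufW P z (j - 1)) :
    ∀ i : ℕ, i < L → v ∈ seg P z i → i + 1 < j ∨ (i = j - 1 ∧ v = z ((j - 1 : ℕ))) := by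
  intro i hiL hmem
  rcases Nat.lt_or_ge (i + 1) j with h | h
  · exact Or.inl h
  · right
    have htail : v ∉ (seg P z i).tail := fun hm => hv (mem_sufW.mpr ⟨i, by omega, hiL, hm⟩)
    obtain ⟨t, ht⟩ := seg_cons hhead z i
    rw [ht] at hmem
    rcases List.mem_cons.mp hmem with h' | h'
    · rcases Nat.lt_or_ge i j with hij | hij
      · have hi' : i = j - 1 := by omega
        exact ⟨hi', by rw [h', hi']⟩
      · exact absurd h' (key_not_milestone hhead hlast hz hj1 hjL hv i hij (by omega))
    · exact absurd (by rw [ht, List.tail_cons]; exact h') htail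

lemma pre_eq {P : Fin n → Fin n → List (Fin n)} {x y : Fin (L + 1) → Fin n} {j : ℕ}
    (hj1 : 1 ≤ j) (heq : ∀ i : ℕ, i < j → x (i : ℕ) = y (i : ℕ)) :
    (x 0 :: (List.range (j - 1)).flatMap fun i => (seg P x i).tail)
      = (y 0 :: (List.range (j - 1)).flatMap fun i => (seg P y i).tail) := by
  have h0 : x 0 = y 0 := by simpa using heq 0 hj1
  rw [h0]
  congr 1
  apply flatMap_congr'
  intro a ha
  rw [List.mem_range] at ha
  have hseg : seg P x a = seg P y a := by
    unfold seg
    rw [← Nat.cast_add_one, heq a (by omega), heq (a + 1) (by omega)]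
  rw [hseg]

lemma core_eq (G : SimpleGraph (Fin n)) (v₁ : Fin n) {P : Fin n → Fin n → List (Fin n)}
    (hhead : ∀ u v, (P u v).head? = some u) (hlast : ∀ u v, (P u v).getLast? = some v)
    {x y : Fin (L + 1) → Fin n} (hx : Function.Injective x) (hy : Function.Injective y)
    {j : ℕ} (hj1 : 1 ≤ j) (hjL : j ≤ L)
    (heq : ∀ i : ℕ, i < j → x (i : ℕ) = y (i : ℕ))
    {v : Fin n} (hvx : v ∉ sufW P x (j - 1)) (hvy : v ∉ sufW P y (j - 1))
    (b₁ b₂ : Bool) :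
    gx G P v₁ x b₁ v = gx G P v₁ y b₂ v := by
  have hL : 1 ≤ L := le_trans hj1 hjL
  have hsegeq : ∀ i : ℕ, i + 1 < j → seg P x i = seg P y i := by
    intro i h
    unfold seg
    rw [← Nat.cast_add_one, heq i (by omega), heq (i + 1) h]
  have hj0 : x ((j - 1 : ℕ) : Fin (L + 1)) = y ((j - 1 : ℕ) : Fin (L + 1)) :=
    heq (j - 1) (by omega)
  have hlast_eq : (Fin.last L) = ((L : ℕ) : Fin (L + 1)) := by
    apply Fin.ext
    rw [Fin.val_last, Fin.val_cast_of_lt (Nat.lt_succ_self L)]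
  have hlx : v ≠ x (Fin.last L) := by
    rw [hlast_eq]
    exact key_not_milestone hhead hlast hx hj1 hjL hvx L hjL le_rfl
  have hly : v ≠ y (Fin.last L) := by
    rw [hlast_eq]
    exact key_not_milestone hhead hlast hy hj1 hjL hvy L hjL le_rfl
  have hfiltiff : ∀ i ∈ Finset.range L, (v ∈ seg P x i ↔ v ∈ seg P y i) := by
    intro i hi
    rw [Finset.mem_range] at hi
    constructor
    · intro h
      rcases key_seg hhead hlast hx hj1 hjL hvx i hi h with h' | ⟨h1, h2⟩
      · rw [← hsegeq i h']; exact h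
      · obtain ⟨t, ht⟩ := seg_cons hhead y (j - 1)
        rw [h1, ht, h2, hj0]
        exact List.mem_cons_self
    · intro h
      rcases key_seg hhead hlast hy hj1 hjL hvy i hi h with h' | ⟨h1, h2⟩
      · rw [hsegeq i h']; exact h
      · obtain ⟨t, ht⟩ := seg_cons hhead x (j - 1)
        rw [h1, ht, h2, ← hj0]
        exact List.mem_cons_self
  have hIdx : segIdx P x v = segIdx P y v := by
    unfold segIdx
    rw [Finset.filter_congr hfiltiff]
  have hmem_iff : (v ∈ staircase P x) ↔ (v ∈ staircase P y) := by
    rw [stair_split P x (show j - 1 ≤ L by omega),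
      stair_split P y (show j - 1 ≤ L by omega), pre_eq hj1 heq,
      List.mem_append, List.mem_append]
    constructor
    · rintro (h | h)
      · exact Or.inl h
      · exact absurd h hvx
    · rintro (h | h)
      · exact Or.inl h
      · exact absurd h hvy
  have hfx : fx G P v₁ x v = fx G P v₁ y v := by
    by_cases hvs : v ∈ staircase P x
    · have hvs' : v ∈ staircase P y := hmem_iff.mp hvs
      unfold fx
      rw [if_pos hvs, if_pos hvs', ← hIdx]
      have hne : ((Finset.range L).filter fun i => v ∈ seg P x i).Nonempty := by
        unfold staircase at hvs
        rcases List.mem_cons.mp hvs with h | h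
        · refine ⟨0, Finset.mem_filter.mpr ⟨Finset.mem_range.mpr (by omega), ?_⟩⟩
          obtain ⟨t, ht⟩ := seg_cons hhead x 0
          have h00 : x ((0 : ℕ) : Fin (L + 1)) = x 0 := by norm_num
          rw [ht, h, h00]
          exact List.mem_cons_self
        · obtain ⟨i, hi, hti⟩ := List.mem_flatMap.mp h
          exact ⟨i, Finset.mem_filter.mpr ⟨Finset.mem_range.mpr (List.mem_range.mp hi),
            List.mem_of_mem_tail hti⟩⟩
      obtain ⟨m, hmF, hsup⟩ := Finset.exists_mem_eq_sup _ hne id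
      have hmseg : segIdx P x v = m := hsup
      obtain ⟨hmL, hmv⟩ := Finset.mem_filter.mp hmF
      rw [Finset.mem_range] at hmL
      have hidx2 : (seg P x (segIdx P x v)).idxOf v = (seg P y (segIdx P x v)).idxOf v := by
        rw [hmseg]
        rcases key_seg hhead hlast hx hj1 hjL hvx m hmL hmv with h' | ⟨h1, h2⟩
        · rw [hsegeq m h']
        · obtain ⟨tx, htx⟩ := seg_cons hhead x (j - 1)
          obtain ⟨ty, hty⟩ := seg_cons hhead y (j - 1)
          rw [h1, htx, hty, h2, hj0, List.idxOf_cons_self, List.idxOf_cons_self]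
      rw [hidx2]
    · have hvs' : v ∉ staircase P y := fun h => hvs (hmem_iff.mpr h)
      unfold fx
      rw [if_neg hvs, if_neg hvs']
  unfold gx
  rw [if_neg hlx, if_neg hly, hfx]

lemma maxPrefix_prefix {x y : Fin (L + 1) → Fin n} (h0 : x 0 = y 0) :
    ∀ i : Fin (L + 1), (i : ℕ) < maxPrefix x y → x i = y i := by
  have h1 : (1 : ℕ) ∈ (Finset.Icc 1 (L + 1)).filter
      fun j => ∀ i : Fin (L + 1), (i : ℕ) < j → x i = y i := by
    refine Finset.mem_filter.mpr ⟨Finset.mem_Icc.mpr ⟨le_rfl, by omega⟩, ?_⟩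
    intro i hi
    have hi0 : i = 0 := Fin.ext (by rw [Fin.val_zero]; omega)
    rw [hi0]
    exact h0
  obtain ⟨m, hm, hsup⟩ := Finset.exists_mem_eq_sup _ ⟨1, h1⟩
    (id : ℕ → ℕ)
  have hmp : maxPrefix x y = m := hsup
  intro i hi
  rw [hmp] at hi
  exact (Finset.mem_filter.mp hm).2 i hi

lemma rrel_nonneg (p q : (Fin (L + 1) → Fin n) × Bool) : 0 ≤ rrel p q := by
  unfold rrel
  split
  · exact le_rfl
  · positivity

lemma rvt_le_rrel (G : SimpleGraph (Fin n)) (P : Fin n → Fin n → List (Fin n))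
    (v₁ v : Fin n) (p q : (Fin (L + 1) → Fin n) × Bool) :
    rvt G P v₁ v p q ≤ rrel p q := by
  unfold rvt rv
  split
  · split
    · exact le_rfl
    · exact rrel_nonneg p q
  · exact rrel_nonneg p q

end Aux

/-- Let `x ∈ {1} × [n]^L`, `b₁ ∈ {0,1}`, `v ∈ V`, and `j ∈ [L]`.  Then
the sum over `y ∈ {1} × [n]^L` with `maxPrefix x y = j` and over `b₂ ∈ {0,1}` of
`r̃_v((x,b₁),(y,b₂))` is at most the sum over `y ∈ {1} × [n]^L` with `maxPrefix x y = j`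
and `v` appearing on `Tail(j, S_y)` of `r((x,b₁),(y,1−b₁))`. -/
theorem stmt13 (hn : 0 < n) (hL : 0 < L)
    (G : SimpleGraph (Fin n)) (hconn : G.Connected)
    (P : Fin n → Fin n → List (Fin n))
    (hhead : ∀ u v, (P u v).head? = some u)
    (hlast : ∀ u v, (P u v).getLast? = some v)
    (hchain : ∀ u v, (P u v).Chain' G.Adj)
    (hnodup : ∀ u v, (P u v).Nodup)
    (hself : ∀ u, P u u = [u])
    (x : Fin (L + 1) → Fin n) (hx0 : x 0 = (⟨0, hn⟩ : Fin n))
    (b₁ : Bool) (v : Fin n) (j : ℕ) (hj1 : 1 ≤ j) (hjL : j ≤ L) :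
    ∑ y ∈ Finset.univ.filter
        (fun y : Fin (L + 1) → Fin n => y 0 = (⟨0, hn⟩ : Fin n) ∧ maxPrefix x y = j),
      ∑ b₂ : Bool, rvt G P ⟨0, hn⟩ v (x, b₁) (y, b₂) ≤
    ∑ y ∈ Finset.univ.filter
        (fun y : Fin (L + 1) → Fin n =>
          y 0 = (⟨0, hn⟩ : Fin n) ∧ maxPrefix x y = j ∧ v ∈ tailWalk P y j),
      rrel (x, b₁) (y, !b₁) := by
  classical
  rw [Finset.sum_filter, Finset.sum_filter]
  apply Finset.sum_le_sum
  intro y _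
  by_cases hy : y 0 = (⟨0, hn⟩ : Fin n) ∧ maxPrefix x y = j
  case neg =>
    rw [if_neg hy, if_neg (fun h => hy ⟨h.1, h.2.1⟩)]
  case pos =>
    obtain ⟨hy0, hmp⟩ := hy
    rw [if_pos ⟨hy0, hmp⟩]
    have h0 : x 0 = y 0 := by rw [hx0, hy0]
    have heq : ∀ i : ℕ, i < j → x (i : ℕ) = y (i : ℕ) := by
      intro i hi
      apply maxPrefix_prefix h0
      rw [Fin.val_cast_of_lt (n := L + 1) (by omega), hmp]
      exact hi
    have hzero : rvt G P ⟨0, hn⟩ v (x, b₁) (y, b₁) = 0 := by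
      unfold rvt rv rrel
      split_ifs with h1 h2 h3
      · rfl
      · exact absurd (Or.inl rfl) h3
      · rfl
      · rfl
    have hsum : ∑ b₂ : Bool, rvt G P ⟨0, hn⟩ v (x, b₁) (y, b₂)
        = rvt G P ⟨0, hn⟩ v (x, b₁) (y, !b₁) := by
      have huniv : (Finset.univ : Finset Bool) = {true, false} := rfl
      rw [huniv, Finset.sum_insert (by simp), Finset.sum_singleton]
      cases b₁
      · simp only [Bool.not_false]
        rw [hzero]
        ring
      · simp only [Bool.not_true]
        rw [hzero]
        ring
    rw [hsum]
    by_cases hvt : v ∈ tailWalk P y j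
    · rw [if_pos ⟨hy0, hmp, hvt⟩]
      exact rvt_le_rrel G P ⟨0, hn⟩ v (x, b₁) (y, !b₁)
    · rw [if_neg (fun h => hvt h.2.2)]
      have hzz : rvt G P ⟨0, hn⟩ v (x, b₁) (y, !b₁) = 0 := by
        unfold rvt rv rrel
        split_ifs with h1 h2 h3
        · rfl
        · exfalso
          push_neg at h3
          obtain ⟨hb, hinjx, hinjy⟩ := h3
          apply h2
          have hvy : v ∉ sufW P y (j - 1) := by
            rw [← tailWalk_eq hhead y hj1 hjL]
            exact hvt
          have hvx : v ∉ sufW P x (j - 1) := by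
            have hsx := stair_split P x (show j - 1 ≤ L by omega)
            have hsy := stair_split P y (show j - 1 ≤ L by omega)
            have hcnt' := h1
            rw [hsx, hsy, List.count_append, List.count_append,
              pre_eq (P := P) hj1 heq] at hcnt'
            have hy0' : (sufW P y (j - 1)).count v = 0 := by
              rw [List.count_eq_zero]
              exact hvy
            rw [hy0'] at hcnt'
            rw [← List.count_eq_zero (a := v)]
            omega
          exact core_eq G ⟨0, hn⟩ hhead hlast hinjx hinjy hj1 hjL heq hvx hvy b₁ (!b₁)
        · rfl
        · rfl
      rw [hzz]
end
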